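/- arXiv:1412.7437 — 2 statements merged into one kernel-verified Lean document; each statement's English description precedes it below -/
import Mathlib

section
/- (Complex Johnson–Lindenstrauss) Let Π = G/√(2d) ∈ C^{d×D} with G_{ij} = A_{ij} + iB_{ij}, A_{ij}, B_{ij} i.i.d. N(0,1). Let v_1,...,v_S ∈ C^D and ε ∈ (0,1). Then with probability at least 1 − 2S e^{−dε²/8}, for all i, ‖Πv_i‖₂ ∈ [(1−ε)‖v_i‖₂, (1+ε)‖v_i‖₂]. -/
open MeasureTheory ProbabilityTheory Matrix
open Real
open scoped NNReal ENNReal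

/-- Euclidean norm on `ℂ^n`. -/
noncomputable def nrm {n : ℕ} (v : Fin n → ℂ) : ℝ := Real.sqrt (∑ i, ‖v i‖ ^ 2)

section JLaux

lemma conv_pdf (a b : NNReal) (ha : a ≠ 0) (hb : b ≠ 0) (y : ℝ) :
    ∫ x : ℝ, gaussianPDFReal 0 b (y - x) * gaussianPDFReal 0 a x
      = gaussianPDFReal 0 (a + b) y := by
  have hA : (0:ℝ) < (a:ℝ) := by positivity
  have hB : (0:ℝ) < (b:ℝ) := by positivity
  set A : ℝ := (a:ℝ) with hAdef
  set B : ℝ := (b:ℝ) with hBdef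
  have hA' : A ≠ 0 := ne_of_gt hA
  have hB' : B ≠ 0 := ne_of_gt hB
  have hAB : A + B ≠ 0 := by positivity
  have merge : ∀ (e1 e2 : ℝ), rexp e1 * rexp e2 = rexp (e1 + e2) :=
    fun _ _ => (Real.exp_add _ _).symm
  have key : ∀ x : ℝ, gaussianPDFReal 0 b (y - x) * gaussianPDFReal 0 a x
      = (√(2 * π * B))⁻¹ * (√(2 * π * A))⁻¹ * rexp (-y ^ 2 / (2 * (A + B))) *
        rexp (-((A + B) / (2 * A * B)) * (x - A * y / (A + B)) ^ 2) := by
    intro x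
    simp only [gaussianPDFReal]
    calc (√(2 * π * B))⁻¹ * rexp (-(y - x - 0) ^ 2 / (2 * B)) *
          ((√(2 * π * A))⁻¹ * rexp (-(x - 0) ^ 2 / (2 * A)))
        = (√(2 * π * B))⁻¹ * (√(2 * π * A))⁻¹ *
          (rexp (-(y - x - 0) ^ 2 / (2 * B)) * rexp (-(x - 0) ^ 2 / (2 * A))) := by ring
      _ = (√(2 * π * B))⁻¹ * (√(2 * π * A))⁻¹ *
          rexp (-(y - x - 0) ^ 2 / (2 * B) + -(x - 0) ^ 2 / (2 * A)) := by rw [merge]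
      _ = (√(2 * π * B))⁻¹ * (√(2 * π * A))⁻¹ *
          rexp (-y ^ 2 / (2 * (A + B)) + -((A + B) / (2 * A * B)) * (x - A * y / (A + B)) ^ 2) := by
            congr 2
            field_simp
            ring
      _ = (√(2 * π * B))⁻¹ * (√(2 * π * A))⁻¹ * rexp (-y ^ 2 / (2 * (A + B))) *
          rexp (-((A + B) / (2 * A * B)) * (x - A * y / (A + B)) ^ 2) := by
            rw [← merge]; ring
  rw [MeasureTheory.integral_congr_ae (Filter.Eventually.of_forall key)]
  rw [MeasureTheory.integral_const_mul]
  rw [show (∫ x : ℝ, rexp (-((A + B) / (2 * A * B)) * (x - A * y / (A + B)) ^ 2))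
      = √(π / ((A + B) / (2 * A * B))) by
    rw [integral_sub_right_eq_self (fun x => rexp (-((A + B) / (2 * A * B)) * x ^ 2))
      (A * y / (A + B))]
    exact integral_gaussian _]
  simp only [gaussianPDFReal]
  have hconst : (√(2 * π * B))⁻¹ * (√(2 * π * A))⁻¹ * √(π / ((A + B) / (2 * A * B)))
      = (√(2 * π * (A + B)))⁻¹ := by
    rw [← Real.sqrt_inv, ← Real.sqrt_inv, ← Real.sqrt_inv, ← Real.sqrt_mul (by positivity),
      ← Real.sqrt_mul (by positivity)]
    congr 1
    field_simp
  have hcoe : ((a + b : NNReal) : ℝ) = A + B := by push_cast; ring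
  rw [hcoe]
  calc (√(2 * π * B))⁻¹ * (√(2 * π * A))⁻¹ * rexp (-y ^ 2 / (2 * (A + B))) *
        √(π / ((A + B) / (2 * A * B)))
      = ((√(2 * π * B))⁻¹ * (√(2 * π * A))⁻¹ * √(π / ((A + B) / (2 * A * B)))) *
        rexp (-y ^ 2 / (2 * (A + B))) := by ring
    _ = (√(2 * π * (A + B)))⁻¹ * rexp (-(y - 0) ^ 2 / (2 * (A + B))) := by
        rw [hconst]; ring_nf

lemma measurable_pdf2 (b : NNReal) :
    Measurable (fun p : ℝ × ℝ => gaussianPDF p.1 b p.2) := by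
  unfold gaussianPDF gaussianPDFReal
  exact ((((measurable_snd.sub measurable_fst).pow_const 2).neg.div_const
    _).exp.const_mul _).ennreal_ofReal

lemma pdf_swap (b : NNReal) (x y : ℝ) :
    gaussianPDFReal x b y = gaussianPDFReal 0 b (y - x) := by
  rw [gaussianPDFReal_sub, zero_add]

lemma pdf_le (b : NNReal) (x y : ℝ) : gaussianPDFReal x b y ≤ (√(2 * π * b))⁻¹ := by
  unfold gaussianPDFReal
  have h1 : rexp (-(y - x) ^ 2 / (2 * b)) ≤ 1 := by
    rw [Real.exp_le_one_iff]
    have hb2 : (0:ℝ) ≤ 2 * (b:ℝ) := by positivity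
    exact div_nonpos_of_nonpos_of_nonneg (neg_nonpos.mpr (sq_nonneg _)) hb2
  calc (√(2 * π * b))⁻¹ * rexp (-(y - x) ^ 2 / (2 * b)) ≤ (√(2 * π * b))⁻¹ * 1 := by
        apply mul_le_mul_of_nonneg_left h1; positivity
    _ = (√(2 * π * b))⁻¹ := mul_one _

lemma gauss_prod_add (a b : NNReal) :
    ((gaussianReal 0 a).prod (gaussianReal 0 b)).map (fun p : ℝ × ℝ => p.1 + p.2)
      = gaussianReal 0 (a + b) := by
  by_cases ha : a = 0
  · subst ha
    rw [gaussianReal_zero_var, Measure.dirac_prod,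
      Measure.map_map measurable_add measurable_prodMk_left]
    simp only [Function.comp_def, zero_add]
    rw [Measure.map_id']
  by_cases hb : b = 0
  · subst hb
    rw [gaussianReal_zero_var, Measure.prod_dirac,
      Measure.map_map measurable_add measurable_prodMk_right]
    simp only [Function.comp_def, add_zero]
    rw [Measure.map_id']
  have hab : a + b ≠ 0 := fun h => ha (add_eq_zero.mp h).1
  ext s hs
  rw [Measure.map_apply measurable_add hs, Measure.prod_apply (measurable_add hs)]
  have hslice : ∀ x : ℝ, (gaussianReal 0 b) (Prod.mk x ⁻¹' ((fun p : ℝ × ℝ => p.1 + p.2) ⁻¹' s))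
      = ∫⁻ y in s, gaussianPDF x b y := by
    intro x
    have hpre : (Prod.mk x ⁻¹' ((fun p : ℝ × ℝ => p.1 + p.2) ⁻¹' s)) = (fun y => x + y) ⁻¹' s :=
      rfl
    rw [hpre, ← Measure.map_apply (measurable_const_add x) hs, gaussianReal_map_const_add x,
      zero_add, gaussianReal_apply x hb s]
  simp_rw [hslice]
  rw [gaussianReal_of_var_ne_zero 0 ha,
    lintegral_withDensity_eq_lintegral_mul volume (measurable_gaussianPDF 0 a)
      (by exact (measurable_pdf2 b).lintegral_prod_right')]
  have hmeasF : Measurable (Function.uncurry fun x y => gaussianPDF 0 a x * gaussianPDF x b y) := by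
    apply Measurable.mul (f := fun p : ℝ × ℝ => gaussianPDF 0 a p.1) (g := fun p : ℝ × ℝ => gaussianPDF p.1 b p.2)
    · exact (measurable_gaussianPDF 0 a).comp measurable_fst
    · exact measurable_pdf2 b
  calc ∫⁻ x, gaussianPDF 0 a x * ∫⁻ y in s, gaussianPDF x b y
      = ∫⁻ x, ∫⁻ y in s, gaussianPDF 0 a x * gaussianPDF x b y := by
        congr 1; ext x
        exact (lintegral_const_mul _ ((measurable_pdf2 b).comp measurable_prodMk_left)).symm
    _ = ∫⁻ y in s, ∫⁻ x, gaussianPDF 0 a x * gaussianPDF x b y := by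
        exact lintegral_lintegral_swap hmeasF.aemeasurable
    _ = ∫⁻ y in s, gaussianPDF 0 (a + b) y := by
        apply lintegral_congr
        intro y
        have hint : Integrable (fun x => gaussianPDFReal x b y * gaussianPDFReal 0 a x) := by
          apply Integrable.bdd_mul (c := (√(2 * π * b))⁻¹) (integrable_gaussianPDFReal 0 a)
          · exact ((((measurable_const.sub measurable_id).pow_const 2).neg.div_const
              _).exp.const_mul _).aestronglyMeasurable
          · refine Filter.Eventually.of_forall fun x => ?_
            rw [Real.norm_eq_abs, abs_of_nonneg (gaussianPDFReal_nonneg _ _ _)]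
            exact pdf_le b x y
        calc ∫⁻ x, gaussianPDF 0 a x * gaussianPDF x b y
            = ∫⁻ x, ENNReal.ofReal (gaussianPDFReal x b y * gaussianPDFReal 0 a x) := by
              congr 1; ext x
              rw [gaussianPDF, gaussianPDF, ← ENNReal.ofReal_mul (gaussianPDFReal_nonneg _ _ _),
                mul_comm]
          _ = ENNReal.ofReal (∫ x, gaussianPDFReal x b y * gaussianPDFReal 0 a x) := by
              rw [← ofReal_integral_eq_lintegral_ofReal hint]
              exact Filter.Eventually.of_forall fun x =>
                mul_nonneg (gaussianPDFReal_nonneg _ _ _) (gaussianPDFReal_nonneg _ _ _)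
          _ = gaussianPDF 0 (a + b) y := by
              rw [gaussianPDF]
              congr 1
              rw [← conv_pdf a b ha hb y]
              congr 1; ext x; rw [pdf_swap]
    _ = (gaussianReal 0 (a + b)) s := (gaussianReal_apply 0 hab s).symm

lemma map_add_gaussian {Ω : Type*} [MeasurableSpace Ω] (μ : Measure Ω) [IsProbabilityMeasure μ]
    {X Y : Ω → ℝ} (hX : Measurable X) (hY : Measurable Y) (h : IndepFun X Y μ)
    (a b : NNReal) (hXl : μ.map X = gaussianReal 0 a) (hYl : μ.map Y = gaussianReal 0 b) :
    μ.map (fun ω => X ω + Y ω) = gaussianReal 0 (a + b) := by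
  have hprod : μ.map (fun ω => (X ω, Y ω)) = (gaussianReal 0 a).prod (gaussianReal 0 b) := by
    rw [← hXl, ← hYl]
    exact (indepFun_iff_map_prod_eq_prod_map_map hX.aemeasurable hY.aemeasurable).mp h
  have hcomp : (fun ω => X ω + Y ω)
      = (fun p : ℝ × ℝ => p.1 + p.2) ∘ (fun ω => (X ω, Y ω)) := rfl
  rw [hcomp, ← Measure.map_map measurable_add (hX.prodMk hY), hprod, gauss_prod_add]

/-- law of a finite linear combination of iid standard gaussians -/
lemma map_lin_gaussian {Ω : Type*} [MeasurableSpace Ω] (μ : Measure Ω) [IsProbabilityMeasure μ]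
    {ι : Type*} [DecidableEq ι] (g : ι → Ω → ℝ) (hmeas : ∀ p, Measurable (g p))
    (hindep : iIndepFun g μ)
    (hgauss : ∀ p, μ.map (g p) = gaussianReal 0 1)
    (c : ι → ℝ) (s : Finset ι) (V : NNReal) (hV : (V : ℝ) = ∑ p ∈ s, (c p) ^ 2) :
    μ.map (fun ω => ∑ p ∈ s, c p * g p ω) = gaussianReal 0 V := by
  classical
  induction s using Finset.induction_on generalizing V with
  | empty =>
      have hV0 : V = 0 := by
        apply NNReal.coe_injective
        simpa using hV
      subst hV0
      simp only [Finset.sum_empty]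
      rw [gaussianReal_zero_var, Measure.map_const, measure_univ, one_smul]
  | insert _ _ hq ih =>
      rename_i q s'
      have hindep' : iIndepFun (fun p ω => c p * g p ω) μ := by
        have := hindep.comp (fun p (x : ℝ) => c p * x) (fun p => measurable_const_mul (c p))
        exact this
      have hmeas' : ∀ p, Measurable (fun ω => c p * g p ω) :=
        fun p => (hmeas p).const_mul (c p)
      have hI : IndepFun (∑ p ∈ s', fun ω => c p * g p ω) (fun ω => c q * g q ω) μ :=
        hindep'.indepFun_finset_sum_of_notMem hmeas' hq
      have hsum_eq : (fun ω => ∑ p ∈ s', c p * g p ω) = (∑ p ∈ s', fun ω => c p * g p ω) := by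
        ext ω; simp
      have hlawq : μ.map (fun ω => c q * g q ω) = gaussianReal 0 ⟨c q ^ 2, sq_nonneg _⟩ := by
        have h1 : μ.map (fun ω => c q * g q ω) = (μ.map (g q)).map (fun x => c q * x) := by
          rw [Measure.map_map (measurable_const_mul (c q)) (hmeas q)]
          rfl
        rw [h1, hgauss q, gaussianReal_map_const_mul]
        congr 1
        · ring
        · ext; push_cast; exact mul_one _
      have hVs : ((⟨∑ p ∈ s', c p ^ 2, by positivity⟩ : NNReal) : ℝ) = ∑ p ∈ s', c p ^ 2 := rfl
      have ihs := ih (V := ⟨∑ p ∈ s', c p ^ 2, by positivity⟩) hVs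
      have hVeq : V = ⟨c q ^ 2, sq_nonneg _⟩ + ⟨∑ p ∈ s', c p ^ 2, by positivity⟩ := by
        apply NNReal.coe_injective
        push_cast
        rw [hV, Finset.sum_insert hq]; rfl
      rw [hVeq]
      have := map_add_gaussian μ (X := fun ω => c q * g q ω)
        (Y := fun ω => ∑ p ∈ s', c p * g p ω) ((hmeas q).const_mul (c q))
        (by exact Finset.measurable_sum _ fun p _ => hmeas' p)
        (by rw [hsum_eq]; exact hI.symm) _ _ hlawq ihs
      rw [← this]
      congr 1
      ext ω
      rw [Finset.sum_insert hq]

lemma exp_sq_pdf_eq (s : ℝ) (x : ℝ) :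
    gaussianPDFReal 0 1 x * rexp (s * x ^ 2)
      = (√(2 * π))⁻¹ * rexp (-(1/2 - s) * x ^ 2) := by
  unfold gaussianPDFReal
  have h1 : -(x - 0)^2/(2 * ((1:NNReal):ℝ)) + s * x^2 = -(1/2 - s) * x^2 := by
    push_cast; ring
  rw [mul_assoc, ← Real.exp_add, h1]
  norm_num

lemma integrable_exp_sq_pdf (s : ℝ) (hs : s < 1/2) :
    Integrable (fun x => gaussianPDFReal 0 1 x * rexp (s * x ^ 2)) := by
  have h : (fun x => gaussianPDFReal 0 1 x * rexp (s * x ^ 2))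
      = fun x => (√(2 * π))⁻¹ * rexp (-(1/2 - s) * x ^ 2) := by
    ext x; exact exp_sq_pdf_eq s x
  rw [h]
  exact (integrable_exp_neg_mul_sq (by linarith)).const_mul _

lemma integral_exp_sq_pdf (s : ℝ) (hs : s < 1/2) :
    ∫ x, gaussianPDFReal 0 1 x * rexp (s * x ^ 2) = (√(1 - 2 * s))⁻¹ := by
  have h : (fun x => gaussianPDFReal 0 1 x * rexp (s * x ^ 2))
      = fun x => (√(2 * π))⁻¹ * rexp (-(1/2 - s) * x ^ 2) := by
    ext x; exact exp_sq_pdf_eq s x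
  rw [h, MeasureTheory.integral_const_mul, integral_gaussian]
  have h1 : (0:ℝ) < 2 * π := by positivity
  have h2 : (0:ℝ) < 1/2 - s := by linarith
  rw [← Real.sqrt_inv, ← Real.sqrt_mul (by positivity)]
  rw [← Real.sqrt_inv]
  congr 1
  have h3 : (1:ℝ) - 2 * s ≠ 0 := by linarith
  have hpi : π ≠ 0 := ne_of_gt Real.pi_pos
  field_simp

lemma exp_sq_meas (s : ℝ) : Measurable (fun x : ℝ => rexp (s * x ^ 2)) :=
  ((measurable_id.pow_const 2).const_mul s).exp

lemma integrable_exp_sq_gaussian (s : ℝ) (hs : s < 1/2) :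
    Integrable (fun x => rexp (s * x ^ 2)) (gaussianReal 0 1) := by
  rw [gaussianReal_of_var_ne_zero 0 one_ne_zero]
  have hpdf : (gaussianPDF 0 1) = fun x => ((gaussianPDFReal 0 1 x).toNNReal : ℝ≥0∞) := rfl
  rw [hpdf, integrable_withDensity_iff_integrable_smul
    (measurable_gaussianPDFReal 0 1).real_toNNReal]
  have : (fun x => (gaussianPDFReal 0 1 x).toNNReal • rexp (s * x ^ 2))
      = fun x => gaussianPDFReal 0 1 x * rexp (s * x ^ 2) := by
    ext x
    rw [NNReal.smul_def, smul_eq_mul, Real.coe_toNNReal _ (gaussianPDFReal_nonneg _ _ _)]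
  rw [this]
  exact integrable_exp_sq_pdf s hs

lemma integral_exp_sq_gaussian (s : ℝ) (hs : s < 1/2) :
    ∫ x, rexp (s * x ^ 2) ∂(gaussianReal 0 1) = (√(1 - 2 * s))⁻¹ := by
  rw [gaussianReal_of_var_ne_zero 0 one_ne_zero]
  have hpdf : (gaussianPDF 0 1) = fun x => ((gaussianPDFReal 0 1 x).toNNReal : ℝ≥0∞) := rfl
  rw [hpdf, integral_withDensity_eq_integral_smul
    (measurable_gaussianPDFReal 0 1).real_toNNReal]
  have : (fun x => (gaussianPDFReal 0 1 x).toNNReal • rexp (s * x ^ 2))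
      = fun x => gaussianPDFReal 0 1 x * rexp (s * x ^ 2) := by
    ext x
    rw [NNReal.smul_def, smul_eq_mul, Real.coe_toNNReal _ (gaussianPDFReal_nonneg _ _ _)]
  rw [this]
  exact integral_exp_sq_pdf s hs

lemma integrable_exp_sq_rv {Ω : Type*} [MeasurableSpace Ω] (μ : Measure Ω)
    {X : Ω → ℝ} (hX : Measurable X) (hXl : μ.map X = gaussianReal 0 1)
    (s : ℝ) (hs : s < 1/2) :
    Integrable (fun ω => rexp (s * X ω ^ 2)) μ := by
  have h := (integrable_map_measure (μ := μ) (f := X) (g := fun x => rexp (s * x ^ 2))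
    ((exp_sq_meas s).aestronglyMeasurable) hX.aemeasurable).mp
  rw [hXl] at h
  exact h (integrable_exp_sq_gaussian s hs)

lemma integral_exp_sq_rv {Ω : Type*} [MeasurableSpace Ω] (μ : Measure Ω)
    {X : Ω → ℝ} (hX : Measurable X) (hXl : μ.map X = gaussianReal 0 1)
    (s : ℝ) (hs : s < 1/2) :
    ∫ ω, rexp (s * X ω ^ 2) ∂μ = (√(1 - 2 * s))⁻¹ := by
  have h := MeasureTheory.integral_map (φ := X) (f := fun x => rexp (s * x ^ 2))
    hX.aemeasurable (by rw [hXl]; exact (exp_sq_meas s).aestronglyMeasurable)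
  rw [hXl, integral_exp_sq_gaussian s hs] at h
  exact h.symm


section JL

variable {Ω : Type*} [MeasurableSpace Ω] {d D : ℕ}

/-- real part coefficient functional -/
noncomputable def JLX (g : (Fin d × Fin D) × Bool → Ω → ℝ) (u : Fin D → ℂ)
    (i : Fin d) (ω : Ω) : ℝ :=
  ∑ j, (g ((i, j), true) ω * (u j).re - g ((i, j), false) ω * (u j).im)

noncomputable def JLY (g : (Fin d × Fin D) × Bool → Ω → ℝ) (u : Fin D → ℂ)
    (i : Fin d) (ω : Ω) : ℝ :=
  ∑ j, (g ((i, j), true) ω * (u j).im + g ((i, j), false) ω * (u j).re)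

noncomputable def JLW (g : (Fin d × Fin D) × Bool → Ω → ℝ) (u : Fin D → ℂ)
    (i : Fin d) (ω : Ω) : ℝ :=
  JLX g u i ω ^ 2 + JLY g u i ω ^ 2


variable {g : (Fin d × Fin D) × Bool → Ω → ℝ} {u : Fin D → ℂ}

lemma JLX_meas (hmeas : ∀ p, Measurable (g p)) (i : Fin d) : Measurable (JLX g u i) :=
  Finset.measurable_sum _ fun j _ =>
    ((hmeas _).mul_const _).sub ((hmeas _).mul_const _)

lemma JLY_meas (hmeas : ∀ p, Measurable (g p)) (i : Fin d) : Measurable (JLY g u i) :=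
  Finset.measurable_sum _ fun j _ =>
    ((hmeas _).mul_const _).add ((hmeas _).mul_const _)

lemma JLW_meas (hmeas : ∀ p, Measurable (g p)) (i : Fin d) : Measurable (JLW g u i) :=
  ((JLX_meas hmeas i).pow_const 2).add ((JLY_meas hmeas i).pow_const 2)

lemma row_sum (i : Fin d) (F : (Fin d × Fin D) × Bool → ℝ) :
    ∑ p ∈ Finset.univ.filter (fun p : (Fin d × Fin D) × Bool => p.1.1 = i), F p
      = ∑ j : Fin D, (F ((i, j), true) + F ((i, j), false)) := by
  classical
  rw [Finset.sum_filter, Fintype.sum_prod_type, Fintype.sum_prod_type]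
  rw [Finset.sum_eq_single i]
  · apply Finset.sum_congr rfl
    intro j _
    simp [Fintype.sum_bool]
  · intro i' _ hne
    apply Finset.sum_eq_zero
    intro j _
    simp [hne]
  · intro h
    exact absurd (Finset.mem_univ i) h

/-- coefficients for the real part -/
noncomputable def cX (u : Fin D → ℂ) (p : (Fin d × Fin D) × Bool) : ℝ :=
  if p.2 then (u p.1.2).re else -(u p.1.2).im

noncomputable def cY (u : Fin D → ℂ) (p : (Fin d × Fin D) × Bool) : ℝ :=
  if p.2 then (u p.1.2).im else (u p.1.2).re

lemma JLX_eq_sum (i : Fin d) (ω : Ω) :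
    JLX g u i ω = ∑ p ∈ Finset.univ.filter (fun p : (Fin d × Fin D) × Bool => p.1.1 = i),
      cX u p * g p ω := by
  rw [row_sum i]
  apply Finset.sum_congr rfl
  intro j _
  simp [cX, JLX]
  ring

lemma JLY_eq_sum (i : Fin d) (ω : Ω) :
    JLY g u i ω = ∑ p ∈ Finset.univ.filter (fun p : (Fin d × Fin D) × Bool => p.1.1 = i),
      cY u p * g p ω := by
  rw [row_sum i]
  apply Finset.sum_congr rfl
  intro j _
  simp [cY, JLY]
  ring

lemma norm_sq_complex (z : ℂ) : ‖z‖ ^ 2 = z.re ^ 2 + z.im ^ 2 := by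
  rw [Complex.sq_norm, Complex.normSq_apply]
  ring

lemma JLX_law (μ : Measure Ω) [IsProbabilityMeasure μ]
    (hmeas : ∀ p, Measurable (g p))
    (hindep : iIndepFun g μ)
    (hgauss : ∀ p, μ.map (g p) = gaussianReal 0 1)
    (hu : ∑ j, ‖u j‖ ^ 2 = 1) (i : Fin d) :
    μ.map (JLX g u i) = gaussianReal 0 1 := by
  have heq : JLX g u i = fun ω =>
      ∑ p ∈ Finset.univ.filter (fun p : (Fin d × Fin D) × Bool => p.1.1 = i),
        cX u p * g p ω := by
    ext ω; exact JLX_eq_sum i ω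
  rw [heq]
  apply map_lin_gaussian μ g hmeas hindep hgauss (cX u) _ 1
  rw [row_sum i (fun p => cX u p ^ 2)]
  simp only [cX]
  norm_num
  push_cast
  rw [← hu]
  apply Finset.sum_congr rfl
  intro j _
  rw [norm_sq_complex]
  try ring

lemma JLY_law (μ : Measure Ω) [IsProbabilityMeasure μ]
    (hmeas : ∀ p, Measurable (g p))
    (hindep : iIndepFun g μ)
    (hgauss : ∀ p, μ.map (g p) = gaussianReal 0 1)
    (hu : ∑ j, ‖u j‖ ^ 2 = 1) (i : Fin d) :
    μ.map (JLY g u i) = gaussianReal 0 1 := by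
  have heq : JLY g u i = fun ω =>
      ∑ p ∈ Finset.univ.filter (fun p : (Fin d × Fin D) × Bool => p.1.1 = i),
        cY u p * g p ω := by
    ext ω; exact JLY_eq_sum i ω
  rw [heq]
  apply map_lin_gaussian μ g hmeas hindep hgauss (cY u) _ 1
  rw [row_sum i (fun p => cY u p ^ 2)]
  simp only [cY]
  norm_num
  push_cast
  rw [← hu]
  apply Finset.sum_congr rfl
  intro j _
  rw [norm_sq_complex]
  try ring

/-- indices whose row lies in `s` -/
def JLS (s : Finset (Fin d)) : Finset ((Fin d × Fin D) × Bool) :=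
  Finset.univ.filter (fun p => p.1.1 ∈ s)

/-- extension of a tuple on `JLS s` by zero -/
noncomputable def JLext (s : Finset (Fin d))
    (x : {p : (Fin d × Fin D) × Bool // p ∈ JLS (d := d) (D := D) s} → ℝ)
    (p : (Fin d × Fin D) × Bool) : ℝ :=
  if h : p ∈ JLS (d := d) (D := D) s then x ⟨p, h⟩ else 0

lemma JLext_meas (s : Finset (Fin d)) (p : (Fin d × Fin D) × Bool) :
    Measurable (fun x => JLext (d := d) (D := D) s x p) := by
  unfold JLext
  by_cases h : p ∈ JLS (d := d) (D := D) s
  · simp only [dif_pos h]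
    exact measurable_pi_apply _
  · simp only [dif_neg h]
    exact measurable_const

lemma JLext_apply (s : Finset (Fin d))
    (x : {p : (Fin d × Fin D) × Bool // p ∈ JLS (d := d) (D := D) s} → ℝ)
    {q : (Fin d × Fin D) × Bool} (hq : q ∈ JLS (d := d) (D := D) s) :
    JLext s x q = x ⟨q, hq⟩ := dif_pos hq

noncomputable def JLphi (u : Fin D → ℂ) (t : ℝ) (s : Finset (Fin d))
    (x : {p : (Fin d × Fin D) × Bool // p ∈ JLS (d := d) (D := D) s} → ℝ) : ℝ :=
  ∏ i ∈ s, rexp (t *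
    ((∑ j, (JLext s x ((i, j), true) * (u j).re - JLext s x ((i, j), false) * (u j).im)) ^ 2 +
     (∑ j, (JLext s x ((i, j), true) * (u j).im + JLext s x ((i, j), false) * (u j).re)) ^ 2))

lemma JLphi_meas (u : Fin D → ℂ) (t : ℝ) (s : Finset (Fin d)) :
    Measurable (JLphi (d := d) (D := D) u t s) := by
  unfold JLphi
  apply Finset.measurable_prod
  intro i _
  apply Measurable.exp
  apply Measurable.const_mul
  apply Measurable.add
  · exact (Finset.measurable_sum _ fun j _ =>
      ((JLext_meas s _).mul_const _).sub ((JLext_meas s _).mul_const _)).pow_const 2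
  · exact (Finset.measurable_sum _ fun j _ =>
      ((JLext_meas s _).mul_const _).add ((JLext_meas s _).mul_const _)).pow_const 2


lemma JLphi_spec (t : ℝ) (s : Finset (Fin d)) (ω : Ω) :
    JLphi u t s (fun p => g (↑p) ω) = ∏ i ∈ s, rexp (t * JLW g u i ω) := by
  unfold JLphi
  apply Finset.prod_congr rfl
  intro i hi
  have hmem : ∀ (j : Fin D) (b : Bool), ((i, j), b) ∈ JLS (d := d) (D := D) s := by
    intro j b
    simp [JLS, hi]
  congr 2
  unfold JLW JLX JLY
  congr 1
  · congr 1
    apply Finset.sum_congr rfl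
    intro j _
    rw [JLext_apply s _ (hmem j true), JLext_apply s _ (hmem j false)]
  · congr 1
    apply Finset.sum_congr rfl
    intro j _
    rw [JLext_apply s _ (hmem j true), JLext_apply s _ (hmem j false)]

lemma JL_indep_step (μ : Measure Ω)
    (hmeas : ∀ p, Measurable (g p))
    (hindep : iIndepFun g μ)
    (t : ℝ) {s : Finset (Fin d)} {k : Fin d} (hk : k ∉ s) :
    IndepFun (fun ω => ∏ i ∈ s, rexp (t * JLW g u i ω))
      (fun ω => rexp (t * JLW g u k ω)) μ := by
  have hdisj : Disjoint (JLS (d := d) (D := D) s) (JLS (d := d) (D := D) {k}) := by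
    rw [Finset.disjoint_left]
    intro p hp hp'
    simp only [JLS, Finset.mem_filter, Finset.mem_univ, true_and, Finset.mem_singleton] at hp hp'
    exact hk (hp' ▸ hp)
  have base := hindep.indepFun_finset _ _ hdisj hmeas
  have h1 := base.comp (JLphi_meas (d := d) (D := D) u t s) (JLphi_meas (d := d) (D := D) u t {k})
  have e1 : (JLphi u t s ∘ fun a (i : {p // p ∈ JLS (d := d) (D := D) s}) => g (↑i) a)
      = fun ω => ∏ i ∈ s, rexp (t * JLW g u i ω) := by
    funext ω
    exact JLphi_spec t s ω
  have e2 : (JLphi u t {k} ∘ fun a (i : {p // p ∈ JLS (d := d) (D := D) {k}}) => g (↑i) a)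
      = fun ω => rexp (t * JLW g u k ω) := by
    funext ω
    show JLphi u t {k} (fun p => g (↑p) ω) = _
    rw [JLphi_spec t {k} ω, Finset.prod_singleton]
  rw [e1, e2] at h1
  exact h1

lemma JL_prod (μ : Measure Ω) [IsProbabilityMeasure μ]
    (hmeas : ∀ p, Measurable (g p))
    (hindep : iIndepFun g μ)
    (t : ℝ) (hint : ∀ i : Fin d, Integrable (fun ω => rexp (t * JLW g u i ω)) μ)
    (s : Finset (Fin d)) :
    Integrable (fun ω => ∏ i ∈ s, rexp (t * JLW g u i ω)) μ ∧
    ∫ ω, ∏ i ∈ s, rexp (t * JLW g u i ω) ∂μ = ∏ i ∈ s, ∫ ω, rexp (t * JLW g u i ω) ∂μ := by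
  classical
  induction s using Finset.induction_on with
  | empty => simp
  | @insert k s' hk ih =>
      have hI : IndepFun (fun ω => rexp (t * JLW g u k ω))
          (fun ω => ∏ i ∈ s', rexp (t * JLW g u i ω)) μ :=
        (JL_indep_step μ hmeas hindep t hk).symm
      have heq : (fun ω => ∏ i ∈ insert k s', rexp (t * JLW g u i ω))
          = (fun ω => rexp (t * JLW g u k ω)) * (fun ω => ∏ i ∈ s', rexp (t * JLW g u i ω)) := by
        funext ω
        simp only [Pi.mul_apply]
        rw [Finset.prod_insert hk]
      constructor
      · rw [heq]
        exact hI.integrable_mul (hint k) ih.1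
      · have h2 := hI.integral_mul_eq_mul_integral (hint k).aestronglyMeasurable ih.1.aestronglyMeasurable
        calc ∫ ω, ∏ i ∈ insert k s', rexp (t * JLW g u i ω) ∂μ
            = ∫ ω, ((fun ω => rexp (t * JLW g u k ω)) *
                (fun ω => ∏ i ∈ s', rexp (t * JLW g u i ω))) ω ∂μ := by rw [← heq]
          _ = (∫ ω, rexp (t * JLW g u k ω) ∂μ) * ∫ ω, ∏ i ∈ s', rexp (t * JLW g u i ω) ∂μ := h2
          _ = ∏ i ∈ insert k s', ∫ ω, rexp (t * JLW g u i ω) ∂μ := by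
              rw [ih.2, Finset.prod_insert hk]

noncomputable def JLQ (g : (Fin d × Fin D) × Bool → Ω → ℝ) (u : Fin D → ℂ) (ω : Ω) : ℝ :=
  ∑ i, JLW g u i ω



lemma JL_row_int (μ : Measure Ω) [IsProbabilityMeasure μ]
    (hmeas : ∀ p, Measurable (g p))
    (hindep : iIndepFun g μ)
    (hgauss : ∀ p, μ.map (g p) = gaussianReal 0 1)
    (hu : ∑ j, ‖u j‖ ^ 2 = 1)
    (t : ℝ) (ht : 4 * t < 1) (i : Fin d) :
    Integrable (fun ω => rexp (t * JLW g u i ω)) μ ∧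
    ∫ ω, rexp (t * JLW g u i ω) ∂μ ≤ (√(1 - 4 * t))⁻¹ := by
  have hs : 2 * t < 1/2 := by linarith
  have hX2 := integrable_exp_sq_rv μ (JLX_meas hmeas i)
    (JLX_law μ hmeas hindep hgauss hu i) (2*t) hs
  have hY2 := integrable_exp_sq_rv μ (JLY_meas hmeas i)
    (JLY_law μ hmeas hindep hgauss hu i) (2*t) hs
  have hXv := integral_exp_sq_rv μ (JLX_meas hmeas i)
    (JLX_law μ hmeas hindep hgauss hu i) (2*t) hs
  have hYv := integral_exp_sq_rv μ (JLY_meas hmeas i)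
    (JLY_law μ hmeas hindep hgauss hu i) (2*t) hs
  have hbound : ∀ ω, rexp (t * JLW g u i ω)
      ≤ (rexp (2*t * JLX g u i ω ^ 2) + rexp (2*t * JLY g u i ω ^ 2)) / 2 := by
    intro ω
    set A := JLX g u i ω
    set B := JLY g u i ω
    have h1 : rexp (t * JLW g u i ω) = rexp (t * A^2) * rexp (t * B^2) := by
      rw [← Real.exp_add]
      unfold A B
      unfold JLW
      ring_nf
    have h2 : rexp (2*t * A^2) = rexp (t * A^2) * rexp (t * A^2) := by
      rw [← Real.exp_add]; ring_nf
    have h3 : rexp (2*t * B^2) = rexp (t * B^2) * rexp (t * B^2) := by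
      rw [← Real.exp_add]; ring_nf
    rw [h1, h2, h3]
    nlinarith [sq_nonneg (rexp (t * A^2) - rexp (t * B^2))]
  have hmeasf : Measurable (fun ω => rexp (t * JLW g u i ω)) :=
    ((JLW_meas hmeas i).const_mul t).exp
  have hintbound : Integrable
      (fun ω => (rexp (2*t * JLX g u i ω ^ 2) + rexp (2*t * JLY g u i ω ^ 2)) / 2) μ :=
    (hX2.add hY2).div_const 2
  have hint : Integrable (fun ω => rexp (t * JLW g u i ω)) μ := by
    apply Integrable.mono' hintbound hmeasf.aestronglyMeasurable
    apply Filter.Eventually.of_forall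
    intro ω
    rw [Real.norm_eq_abs, abs_of_pos (Real.exp_pos _)]
    exact hbound ω
  refine ⟨hint, ?_⟩
  calc ∫ ω, rexp (t * JLW g u i ω) ∂μ
      ≤ ∫ ω, (rexp (2*t * JLX g u i ω ^ 2) + rexp (2*t * JLY g u i ω ^ 2)) / 2 ∂μ :=
        integral_mono hint hintbound hbound
    _ = ((∫ ω, rexp (2*t * JLX g u i ω ^ 2) ∂μ) + ∫ ω, rexp (2*t * JLY g u i ω ^ 2) ∂μ) / 2 := by
        rw [integral_div, integral_add hX2 hY2]
    _ = (√(1 - 4 * t))⁻¹ := by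
        rw [hXv, hYv]
        have h4 : 1 - 2 * (2 * t) = 1 - 4 * t := by ring
        rw [h4]
        ring

lemma JL_mgf_bound (μ : Measure Ω) [IsProbabilityMeasure μ]
    (hmeas : ∀ p, Measurable (g p))
    (hindep : iIndepFun g μ)
    (hgauss : ∀ p, μ.map (g p) = gaussianReal 0 1)
    (hu : ∑ j, ‖u j‖ ^ 2 = 1)
    (t : ℝ) (ht : 4 * t < 1) :
    Integrable (fun ω => rexp (t * JLQ g u ω)) μ ∧
    ∫ ω, rexp (t * JLQ g u ω) ∂μ ≤ ((√(1 - 4 * t))⁻¹) ^ d := by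
  have hexp : ∀ ω : Ω, rexp (t * JLQ g u ω) = ∏ i, rexp (t * JLW g u i ω) := by
    intro ω
    unfold JLQ
    rw [Finset.mul_sum, Real.exp_sum]
  have rows := fun i : Fin d => JL_row_int μ hmeas hindep hgauss hu t ht i
  have prod := JL_prod μ hmeas hindep t (fun i => (rows i).1) Finset.univ
  have hfeq : (fun ω => rexp (t * JLQ g u ω)) = fun ω => ∏ i, rexp (t * JLW g u i ω) := by
    funext ω; exact hexp ω
  constructor
  · rw [hfeq]; exact prod.1
  · rw [hfeq, prod.2]
    calc ∏ i : Fin d, ∫ ω, rexp (t * JLW g u i ω) ∂μ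
        ≤ ∏ _i : Fin d, (√(1 - 4 * t))⁻¹ :=
          Finset.prod_le_prod (fun i _ => integral_nonneg fun ω => (Real.exp_pos _).le)
            (fun i _ => (rows i).2)
      _ = ((√(1 - 4 * t))⁻¹) ^ d := by
          rw [Finset.prod_const, Finset.card_univ, Fintype.card_fin]

lemma JL_core (μ : Measure Ω) [IsProbabilityMeasure μ]
    (hmeas : ∀ p, Measurable (g p))
    (hindep : iIndepFun g μ)
    (hgauss : ∀ p, μ.map (g p) = gaussianReal 0 1)
    (hu : ∑ j, ‖u j‖ ^ 2 = 1)
    (ε : ℝ) (hε0 : 0 < ε) (hε1 : ε < 1) :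
    μ ({ω | JLQ g u ω < 2 * d * (1 - ε) ^ 2} ∪ {ω | 2 * d * (1 + ε) ^ 2 < JLQ g u ω})
      ≤ ENNReal.ofReal (2 * rexp (-(d * ε ^ 2) / 8)) := by
  have hεp : (0:ℝ) < 1 + ε := by linarith
  have hεm : (0:ℝ) < 1 - ε := by linarith
  have hdε : (0:ℝ) ≤ (d:ℝ) * ε ^ 2 := by positivity
  have he8 : rexp (-((d:ℝ) * ε ^ 2) / 2) ≤ rexp (-((d:ℝ) * ε ^ 2) / 8) := by
    apply Real.exp_le_exp.mpr
    linarith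
  -- upper tail
  have hup : μ {ω | 2 * d * (1 + ε) ^ 2 < JLQ g u ω}
      ≤ ENNReal.ofReal (rexp (-((d:ℝ) * ε ^ 2) / 8)) := by
    set t : ℝ := (1 - ((1 + ε) ^ 2)⁻¹) / 4 with htdef
    have hinvpos : (0:ℝ) < ((1 + ε) ^ 2)⁻¹ := by positivity
    have hinvle : ((1 + ε) ^ 2)⁻¹ ≤ 1 := by
      rw [inv_le_one_iff₀]
      right
      nlinarith
    have ht0 : 0 ≤ t := by rw [htdef]; linarith
    have h4t : 4 * t < 1 := by rw [htdef]; linarith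
    obtain ⟨hint, hval⟩ := JL_mgf_bound μ hmeas hindep hgauss hu t h4t
    have hchern := measure_ge_le_exp_mul_mgf (μ := μ) (X := JLQ g u)
      (2 * d * (1 + ε) ^ 2) ht0 hint
    have hmgf : mgf (JLQ g u) μ t = ∫ ω, rexp (t * JLQ g u ω) ∂μ := rfl
    have hsq : (√(1 - 4 * t))⁻¹ = 1 + ε := by
      have h14 : 1 - 4 * t = ((1 + ε) ^ 2)⁻¹ := by rw [htdef]; ring
      rw [h14, Real.sqrt_inv, Real.sqrt_sq hεp.le, inv_inv]
    have hbound2 : mgf (JLQ g u) μ t ≤ (1 + ε) ^ d := by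
      rw [hmgf]
      calc ∫ ω, rexp (t * JLQ g u ω) ∂μ ≤ ((√(1 - 4 * t))⁻¹) ^ d := hval
        _ = (1 + ε) ^ d := by rw [hsq]
    have hpow : (1 + ε) ^ d ≤ rexp ((d:ℝ) * ε) := by
      calc (1 + ε) ^ d ≤ (rexp ε) ^ d := by
            apply pow_le_pow_left₀ hεp.le
            linarith [Real.add_one_le_exp ε]
        _ = rexp ((d:ℝ) * ε) := by rw [← Real.exp_nat_mul]
    have hexpU : -t * (2 * (d:ℝ) * (1 + ε) ^ 2) = -((d:ℝ) * (2 * ε + ε ^ 2)) / 2 := by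
      rw [htdef]
      have hne : (1 + ε) ^ 2 ≠ 0 := by positivity
      field_simp
      ring
    have hfinal : (μ {ω | 2 * d * (1 + ε) ^ 2 ≤ JLQ g u ω}).toReal
        ≤ rexp (-((d:ℝ) * ε ^ 2) / 8) := by
      calc (μ {ω | 2 * d * (1 + ε) ^ 2 ≤ JLQ g u ω}).toReal
          ≤ rexp (-t * (2 * d * (1 + ε) ^ 2)) * mgf (JLQ g u) μ t := hchern
        _ ≤ rexp (-((d:ℝ) * (2 * ε + ε ^ 2)) / 2) * (1 + ε) ^ d := by
            rw [hexpU]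
            exact mul_le_mul_of_nonneg_left hbound2 (Real.exp_pos _).le
        _ ≤ rexp (-((d:ℝ) * (2 * ε + ε ^ 2)) / 2) * rexp ((d:ℝ) * ε) := by
            exact mul_le_mul_of_nonneg_left hpow (Real.exp_pos _).le
        _ = rexp (-((d:ℝ) * ε ^ 2) / 2) := by
            rw [← Real.exp_add]
            congr 1
            ring
        _ ≤ rexp (-((d:ℝ) * ε ^ 2) / 8) := he8
    calc μ {ω | 2 * d * (1 + ε) ^ 2 < JLQ g u ω}
        ≤ μ {ω | 2 * d * (1 + ε) ^ 2 ≤ JLQ g u ω} := by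
          apply measure_mono
          intro ω hω
          simp only [Set.mem_setOf_eq] at hω ⊢
          exact hω.le
      _ ≤ ENNReal.ofReal (rexp (-((d:ℝ) * ε ^ 2) / 8)) :=
          (ENNReal.le_ofReal_iff_toReal_le (measure_ne_top μ _) (Real.exp_pos _).le).mpr hfinal
  -- lower tail
  have hlow : μ {ω | JLQ g u ω < 2 * d * (1 - ε) ^ 2}
      ≤ ENNReal.ofReal (rexp (-((d:ℝ) * ε ^ 2) / 8)) := by
    set t : ℝ := (1 - ((1 - ε) ^ 2)⁻¹) / 4 with htdef
    have hsqm : (0:ℝ) < (1 - ε) ^ 2 := by positivity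
    have hinvge : 1 ≤ ((1 - ε) ^ 2)⁻¹ := by
      rw [le_inv_comm₀]
      · nlinarith
      · norm_num
      · exact hsqm
    have ht0 : t ≤ 0 := by rw [htdef]; linarith
    have h4t : 4 * t < 1 := by rw [htdef]; linarith
    obtain ⟨hint, hval⟩ := JL_mgf_bound μ hmeas hindep hgauss hu t h4t
    have hchern := measure_le_le_exp_mul_mgf (μ := μ) (X := JLQ g u)
      (2 * d * (1 - ε) ^ 2) ht0 hint
    have hmgf : mgf (JLQ g u) μ t = ∫ ω, rexp (t * JLQ g u ω) ∂μ := rfl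
    have hsq : (√(1 - 4 * t))⁻¹ = 1 - ε := by
      have h14 : 1 - 4 * t = ((1 - ε) ^ 2)⁻¹ := by rw [htdef]; ring
      rw [h14, Real.sqrt_inv, Real.sqrt_sq hεm.le, inv_inv]
    have hbound2 : mgf (JLQ g u) μ t ≤ (1 - ε) ^ d := by
      rw [hmgf]
      calc ∫ ω, rexp (t * JLQ g u ω) ∂μ ≤ ((√(1 - 4 * t))⁻¹) ^ d := hval
        _ = (1 - ε) ^ d := by rw [hsq]
    have hpow : (1 - ε) ^ d ≤ rexp (-((d:ℝ) * ε)) := by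
      calc (1 - ε) ^ d ≤ (rexp (-ε)) ^ d := by
            apply pow_le_pow_left₀ hεm.le
            linarith [Real.add_one_le_exp (-ε)]
        _ = rexp (-((d:ℝ) * ε)) := by rw [← Real.exp_nat_mul]; congr 1; ring
    have hexpL : -t * (2 * (d:ℝ) * (1 - ε) ^ 2) = ((d:ℝ) * (2 * ε - ε ^ 2)) / 2 := by
      rw [htdef]
      have hne : (1 - ε) ^ 2 ≠ 0 := by positivity
      field_simp
      ring
    have hfinal : (μ {ω | JLQ g u ω ≤ 2 * d * (1 - ε) ^ 2}).toReal
        ≤ rexp (-((d:ℝ) * ε ^ 2) / 8) := by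
      calc (μ {ω | JLQ g u ω ≤ 2 * d * (1 - ε) ^ 2}).toReal
          ≤ rexp (-t * (2 * d * (1 - ε) ^ 2)) * mgf (JLQ g u) μ t := hchern
        _ ≤ rexp (((d:ℝ) * (2 * ε - ε ^ 2)) / 2) * (1 - ε) ^ d := by
            rw [hexpL]
            exact mul_le_mul_of_nonneg_left hbound2 (Real.exp_pos _).le
        _ ≤ rexp (((d:ℝ) * (2 * ε - ε ^ 2)) / 2) * rexp (-((d:ℝ) * ε)) := by
            exact mul_le_mul_of_nonneg_left hpow (Real.exp_pos _).le
        _ = rexp (-((d:ℝ) * ε ^ 2) / 2) := by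
            rw [← Real.exp_add]
            congr 1
            ring
        _ ≤ rexp (-((d:ℝ) * ε ^ 2) / 8) := he8
    calc μ {ω | JLQ g u ω < 2 * d * (1 - ε) ^ 2}
        ≤ μ {ω | JLQ g u ω ≤ 2 * d * (1 - ε) ^ 2} := by
          apply measure_mono
          intro ω hω
          simp only [Set.mem_setOf_eq] at hω ⊢
          exact hω.le
      _ ≤ ENNReal.ofReal (rexp (-((d:ℝ) * ε ^ 2) / 8)) :=
          (ENNReal.le_ofReal_iff_toReal_le (measure_ne_top μ _) (Real.exp_pos _).le).mpr hfinal
  calc μ ({ω | JLQ g u ω < 2 * d * (1 - ε) ^ 2} ∪ {ω | 2 * d * (1 + ε) ^ 2 < JLQ g u ω})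
      ≤ μ {ω | JLQ g u ω < 2 * d * (1 - ε) ^ 2}
        + μ {ω | 2 * d * (1 + ε) ^ 2 < JLQ g u ω} := measure_union_le _ _
    _ ≤ ENNReal.ofReal (rexp (-((d:ℝ) * ε ^ 2) / 8))
        + ENNReal.ofReal (rexp (-((d:ℝ) * ε ^ 2) / 8)) := add_le_add hlow hup
    _ = ENNReal.ofReal (2 * rexp (-(d * ε ^ 2) / 8)) := by
        rw [← ENNReal.ofReal_add (Real.exp_pos _).le (Real.exp_pos _).le]
        congr 1
        ring

end JL

end JLaux

set_option maxHeartbeats 1000000 in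
/-- Complex Johnson–Lindenstrauss: for `Π = G/√(2d)` with i.i.d. standard complex
Gaussian entries and vectors `v 1, …, v S` in `ℂ^D`, with probability at least
`1 − 2 S e^{−d ε²/8}` all lengths `‖Π v i‖` lie within `[(1−ε)‖v i‖, (1+ε)‖v i‖]`. -/
theorem complex_johnson_lindenstrauss
    {Ω : Type*} [MeasurableSpace Ω] (μ : Measure Ω) [IsProbabilityMeasure μ]
    (d D S : ℕ) (hd : 0 < d)
    (g : (Fin d × Fin D) × Bool → Ω → ℝ)
    (hmeas : ∀ p, Measurable (g p))
    (hindep : iIndepFun g μ)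
    (hgauss : ∀ p, μ.map (g p) = gaussianReal 0 1)
    (P : Ω → Matrix (Fin d) (Fin D) ℂ)
    (hP : ∀ ω i j, P ω i j =
      ((g ((i, j), true) ω : ℂ) + (g ((i, j), false) ω : ℂ) * Complex.I) /
        (Real.sqrt (2 * d) : ℂ))
    (v : Fin S → (Fin D → ℂ)) (ε : ℝ) (hε0 : 0 < ε) (hε1 : ε < 1) :
    ENNReal.ofReal (1 - 2 * S * Real.exp (-(d * ε ^ 2) / 8)) ≤
      μ {ω | ∀ i, (1 - ε) * nrm (v i) ≤ nrm ((P ω).mulVec (v i)) ∧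
                  nrm ((P ω).mulVec (v i)) ≤ (1 + ε) * nrm (v i)} := by
  classical
  have hdR : (0:ℝ) < (d:ℝ) := by exact_mod_cast hd
  have h2d : (0:ℝ) < 2 * (d:ℝ) := by linarith
  have key : ∀ k : Fin S, ∃ B : Set Ω,
      μ B ≤ ENNReal.ofReal (2 * Real.exp (-((d:ℝ) * ε ^ 2) / 8)) ∧
      ∀ ω, ω ∉ B → ((1 - ε) * nrm (v k) ≤ nrm ((P ω).mulVec (v k)) ∧
        nrm ((P ω).mulVec (v k)) ≤ (1 + ε) * nrm (v k)) := by
    intro k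
    by_cases hz : nrm (v k) = 0
    · refine ⟨∅, by simp, fun ω _ => ?_⟩
      have hnn : 0 ≤ ∑ j, ‖v k j‖ ^ 2 := Finset.sum_nonneg fun j _ => sq_nonneg _
      have hsum0 : ∑ j, ‖v k j‖ ^ 2 = 0 := by
        have h := hz
        unfold nrm at h
        nlinarith [Real.sq_sqrt hnn, h]
      have hv0 : v k = 0 := by
        funext j
        have h1 : ‖v k j‖ ^ 2 = 0 :=
          (Finset.sum_eq_zero_iff_of_nonneg (fun j _ => by positivity)).mp hsum0 j
            (Finset.mem_univ j)
        have h2 : ‖v k j‖ = 0 := by nlinarith [norm_nonneg (v k j)]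
        exact norm_eq_zero.mp h2
      rw [hz, hv0, Matrix.mulVec_zero]
      have h0 : nrm (0 : Fin d → ℂ) = 0 := by unfold nrm; simp
      rw [h0]
      norm_num
    · set r : ℝ := nrm (v k) with hrdef
      have hrnn : 0 ≤ r := Real.sqrt_nonneg _
      have hr : 0 < r := lt_of_le_of_ne hrnn (Ne.symm hz)
      set u : Fin D → ℂ := fun j => v k j / (r : ℂ) with hudef
      have hsumv : ∑ j, ‖v k j‖ ^ 2 = r ^ 2 := by
        have hnn2 : (0:ℝ) ≤ ∑ j, ‖v k j‖ ^ 2 := Finset.sum_nonneg fun j _ => sq_nonneg _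
        rw [hrdef]
        unfold nrm
        rw [Real.sq_sqrt hnn2]
      have hu : ∑ j, ‖u j‖ ^ 2 = 1 := by
        have hterm : ∀ j, ‖u j‖ ^ 2 = ‖v k j‖ ^ 2 / r ^ 2 := by
          intro j
          rw [hudef]
          simp only
          rw [norm_div, Complex.norm_real, Real.norm_eq_abs, abs_of_pos hr, div_pow]
        rw [Finset.sum_congr rfl (fun j _ => hterm j), ← Finset.sum_div, hsumv,
          div_self (by positivity)]
      refine ⟨{ω | JLQ g u ω < 2 * d * (1 - ε) ^ 2} ∪ {ω | 2 * d * (1 + ε) ^ 2 < JLQ g u ω},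
        JL_core μ hmeas hindep hgauss hu ε hε0 hε1, ?_⟩
      intro ω hω
      have hQ : 2 * (d:ℝ) * (1 - ε) ^ 2 ≤ JLQ g u ω ∧ JLQ g u ω ≤ 2 * d * (1 + ε) ^ 2 := by
        simp only [Set.mem_union, Set.mem_setOf_eq, not_or, not_lt] at hω
        exact ⟨hω.1, hω.2⟩
      have hvj : ∀ j, v k j = (r : ℂ) * u j := by
        intro j
        rw [hudef]
        have : (r : ℂ) ≠ 0 := by exact_mod_cast ne_of_gt hr
        field_simp
      have hsqrt2d : (0:ℝ) < Real.sqrt (2 * d) := Real.sqrt_pos.mpr h2d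
      have hc : ((Real.sqrt (2 * (d:ℝ)) : ℝ) : ℂ) ≠ 0 := by
        exact_mod_cast ne_of_gt hsqrt2d
      have hmv : ∀ i, (P ω).mulVec (v k) i
          = ((r : ℂ) / ((Real.sqrt (2 * d) : ℝ) : ℂ)) *
            ((JLX g u i ω : ℂ) + (JLY g u i ω : ℂ) * Complex.I) := by
        intro i
        have hstep1 : (P ω).mulVec (v k) i = ∑ j, P ω i j * v k j := by
          simp [Matrix.mulVec, dotProduct]
        rw [hstep1]
        have hterm : ∀ j, P ω i j * v k j
            = ((r : ℂ) / ((Real.sqrt (2 * d) : ℝ) : ℂ)) *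
              (((g ((i, j), true) ω * (u j).re - g ((i, j), false) ω * (u j).im : ℝ) : ℂ)
                + ((g ((i, j), true) ω * (u j).im + g ((i, j), false) ω * (u j).re : ℝ) : ℂ)
                  * Complex.I) := by
          intro j
          rw [hP ω i j, hvj j]
          have hmain : (((g ((i, j), true) ω : ℝ) : ℂ)
                + ((g ((i, j), false) ω : ℝ) : ℂ) * Complex.I) * u j
              = (((g ((i, j), true) ω * (u j).re - g ((i, j), false) ω * (u j).im : ℝ)) : ℂ)
                + (((g ((i, j), true) ω * (u j).im + g ((i, j), false) ω * (u j).re : ℝ)) : ℂ)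
                  * Complex.I := by
            apply Complex.ext <;> simp [Complex.mul_re, Complex.mul_im] <;> ring
          rw [← hmain, div_mul_eq_mul_div, div_mul_eq_mul_div]
          congr 1
          ring
        rw [Finset.sum_congr rfl (fun j _ => hterm j), ← Finset.mul_sum]
        congr 1
        rw [Finset.sum_add_distrib, ← Finset.sum_mul]
        unfold JLX JLY
        push_cast
        ring
      have hni : ∀ i, ‖(P ω).mulVec (v k) i‖ ^ 2 = r ^ 2 / (2 * d) * JLW g u i ω := by
        intro i
        rw [hmv i, norm_mul, mul_pow, norm_div]
        have h1 : ‖((r : ℝ) : ℂ)‖ = r := by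
          rw [Complex.norm_real, Real.norm_eq_abs, abs_of_pos hr]
        have h2 : ‖((Real.sqrt (2 * d) : ℝ) : ℂ)‖ = Real.sqrt (2 * d) := by
          rw [Complex.norm_real, Real.norm_eq_abs, abs_of_pos hsqrt2d]
        have h3 : ‖(JLX g u i ω : ℂ) + (JLY g u i ω : ℂ) * Complex.I‖ ^ 2 = JLW g u i ω := by
          rw [norm_sq_complex]
          unfold JLW
          simp
        rw [h1, h2, h3, div_pow, Real.sq_sqrt h2d.le]
      have hnormsq : nrm ((P ω).mulVec (v k)) ^ 2 = r ^ 2 * JLQ g u ω / (2 * (d:ℝ)) := by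
        have hnn3 : (0:ℝ) ≤ ∑ i, ‖(P ω).mulVec (v k) i‖ ^ 2 := Finset.sum_nonneg fun i _ => sq_nonneg _
        unfold nrm
        rw [Real.sq_sqrt hnn3]
        rw [Finset.sum_congr rfl (fun i _ => hni i), ← Finset.mul_sum]
        unfold JLQ
        ring
      have hNnn : 0 ≤ nrm ((P ω).mulVec (v k)) := Real.sqrt_nonneg _
      constructor
      · have ha : 0 ≤ (1 - ε) * r := mul_nonneg (by linarith) hrnn
        have hsq : ((1 - ε) * r) ^ 2 ≤ nrm ((P ω).mulVec (v k)) ^ 2 := by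
          rw [hnormsq, le_div_iff₀ h2d]
          nlinarith [mul_le_mul_of_nonneg_left hQ.1 (sq_nonneg r)]
        have := Real.sqrt_le_sqrt hsq
        rwa [Real.sqrt_sq ha, Real.sqrt_sq hNnn] at this
      · have ha : 0 ≤ (1 + ε) * r := mul_nonneg (by linarith) hrnn
        have hsq : nrm ((P ω).mulVec (v k)) ^ 2 ≤ ((1 + ε) * r) ^ 2 := by
          rw [hnormsq, div_le_iff₀ h2d]
          nlinarith [mul_le_mul_of_nonneg_left hQ.2 (sq_nonneg r)]
        have := Real.sqrt_le_sqrt hsq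
        rwa [Real.sqrt_sq hNnn, Real.sqrt_sq ha] at this
  choose B hB1 hB2 using key
  set Good : Set Ω := {ω | ∀ i, (1 - ε) * nrm (v i) ≤ nrm ((P ω).mulVec (v i)) ∧
      nrm ((P ω).mulVec (v i)) ≤ (1 + ε) * nrm (v i)} with hGood
  have hsub : Goodᶜ ⊆ ⋃ k, B k := by
    intro ω hω
    rw [Set.mem_compl_iff, hGood, Set.mem_setOf_eq, not_forall] at hω
    obtain ⟨k, hk⟩ := hω
    refine Set.mem_iUnion.mpr ⟨k, ?_⟩
    by_contra hnb
    exact hk (hB2 k ω hnb)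
  have hbadsum : μ (⋃ k, B k) ≤ ENNReal.ofReal (2 * S * Real.exp (-((d:ℝ) * ε ^ 2) / 8)) := by
    calc μ (⋃ k, B k) ≤ ∑' k, μ (B k) := measure_iUnion_le _
      _ = ∑ k, μ (B k) := tsum_fintype _
      _ ≤ ∑ _k : Fin S, ENNReal.ofReal (2 * Real.exp (-((d:ℝ) * ε ^ 2) / 8)) :=
          Finset.sum_le_sum (fun k _ => hB1 k)
      _ = (S : ℝ≥0∞) * ENNReal.ofReal (2 * Real.exp (-((d:ℝ) * ε ^ 2) / 8)) := by
          rw [Finset.sum_const, Finset.card_univ, Fintype.card_fin, nsmul_eq_mul]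
      _ = ENNReal.ofReal (2 * S * Real.exp (-((d:ℝ) * ε ^ 2) / 8)) := by
          rw [← ENNReal.ofReal_natCast S, ← ENNReal.ofReal_mul (by positivity)]
          congr 1
          ring
  have hbad : μ Goodᶜ ≤ ENNReal.ofReal (2 * S * Real.exp (-((d:ℝ) * ε ^ 2) / 8)) :=
    le_trans (measure_mono hsub) hbadsum
  calc ENNReal.ofReal (1 - 2 * S * Real.exp (-((d:ℝ) * ε ^ 2) / 8))
      = 1 - ENNReal.ofReal (2 * S * Real.exp (-((d:ℝ) * ε ^ 2) / 8)) := by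
        rw [ENNReal.ofReal_sub _ (by positivity), ENNReal.ofReal_one]
    _ ≤ 1 - μ Goodᶜ := tsub_le_tsub_left hbad 1
    _ ≤ μ Good := by
        rw [tsub_le_iff_right]
        calc (1 : ℝ≥0∞) = μ Set.univ := measure_univ.symm
          _ = μ (Good ∪ Goodᶜ) := by rw [Set.union_compl_self]
          _ ≤ μ Good + μ Goodᶜ := measure_union_le _ _
end

section
/- Let Π ∈ C^{d×D} be an ε-JL matrix for a common set of unit eigenvectors of psd matrices M_i = Σ_a λ^i_a |ψ^i_a⟩⟨ψ^i_a| (i ∈ [J], λ^i_a ≥ 0). Then for M'_i := Π M_i Π†, and all i,j, |tr(M'_i M'_j) − tr(M_i M_j)| ≤ 192 ε ‖M_i‖₁ ‖M_j‖₁. -/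
open Matrix
open scoped ComplexOrder

/-- `A` has the ε-JL property for the vector `w`. -/
def JLprop {d D : ℕ} (A : Matrix (Fin d) (Fin D) ℂ) (ε : ℝ) (w : Fin D → ℂ) : Prop :=
  (1 - ε) * nrm w ≤ nrm (A.mulVec w) ∧ nrm (A.mulVec w) ≤ (1 + ε) * nrm w

namespace JLAux

variable {n d D : ℕ}

noncomputable def n2 (v : Fin n → ℂ) : ℝ := ∑ i, Complex.normSq (v i)

noncomputable def ip (u v : Fin n → ℂ) : ℂ := ∑ i, (starRingEnd ℂ) (u i) * v i

lemma n2_nonneg (v : Fin n → ℂ) : 0 ≤ n2 v :=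
  Finset.sum_nonneg fun i _ => Complex.normSq_nonneg _

lemma nrm_sq (v : Fin n → ℂ) : nrm v ^ 2 = n2 v := by
  have : nrm v = Real.sqrt (n2 v) := by simp [nrm, n2, Complex.sq_norm]
  rw [this, Real.sq_sqrt (n2_nonneg v)]

lemma nrm_nonneg (v : Fin n → ℂ) : 0 ≤ nrm v := Real.sqrt_nonneg _

lemma key : ∀ z w : ℂ, (z * (starRingEnd ℂ) w).re = ((starRingEnd ℂ) z * w).re := by
  intro z w; simp [Complex.mul_re]

lemma n2_add (u v : Fin n → ℂ) :
    n2 (u + v) = n2 u + n2 v + 2 * (ip u v).re := by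
  simp only [n2, ip, Pi.add_apply, Complex.normSq_add, Complex.re_sum, Finset.sum_add_distrib,
    Finset.mul_sum, key]

lemma ip_conj (u v : Fin n → ℂ) : ip v u = (starRingEnd ℂ) (ip u v) := by
  simp only [ip, map_sum]; exact Finset.sum_congr rfl fun i _ => by simp [mul_comm]

lemma ip_smul_right (c : ℂ) (u v : Fin n → ℂ) : ip u (c • v) = c * ip u v := by
  simp only [ip, Pi.smul_apply, smul_eq_mul, Finset.mul_sum]
  exact Finset.sum_congr rfl fun i _ => by ring

lemma ip_neg_right (u v : Fin n → ℂ) : ip u (-v) = - ip u v := by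
  simp [ip]

lemma n2_neg (v : Fin n → ℂ) : n2 (-v) = n2 v := by simp [n2]

lemma n2_smul_I (v : Fin n → ℂ) : n2 (Complex.I • v) = n2 v := by
  simp [n2, Complex.normSq_mul]

lemma n2_sub (u v : Fin n → ℂ) :
    n2 (u - v) = n2 u + n2 v - 2 * (ip u v).re := by
  have := n2_add u (-v)
  rw [ip_neg_right, n2_neg] at this
  simpa [sub_eq_add_neg] using this

lemma n2_add_I (u v : Fin n → ℂ) :
    n2 (u + Complex.I • v) = n2 u + n2 v - 2 * (ip u v).im := by
  rw [n2_add, ip_smul_right, n2_smul_I, Complex.mul_re]; simp; ring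

lemma n2_sub_I (u v : Fin n → ℂ) :
    n2 (u - Complex.I • v) = n2 u + n2 v + 2 * (ip u v).im := by
  rw [n2_sub, ip_smul_right, n2_smul_I, Complex.mul_re]; simp

lemma jl_n2 {A : Matrix (Fin d) (Fin D) ℂ} {ε : ℝ} (hε0 : 0 < ε) (hε1 : ε ≤ 1)
    {w : Fin D → ℂ} (h : JLprop A ε w) :
    |n2 (A.mulVec w) - n2 w| ≤ 3 * ε * n2 w := by
  obtain ⟨h1, h2⟩ := h
  have h1e : 0 ≤ 1 - ε := by linarith
  have hw := nrm_nonneg w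
  have hAw := nrm_nonneg (A.mulVec w)
  have hup : n2 (A.mulVec w) ≤ (1 + ε)^2 * n2 w := by
    rw [← nrm_sq, ← nrm_sq]
    calc nrm (A.mulVec w) ^ 2 ≤ ((1+ε) * nrm w)^2 := by
          apply pow_le_pow_left₀ hAw h2
      _ = (1+ε)^2 * nrm w ^2 := by ring
  have hlo : (1 - ε)^2 * n2 w ≤ n2 (A.mulVec w) := by
    rw [← nrm_sq, ← nrm_sq]
    calc (1-ε)^2 * nrm w ^ 2 = ((1-ε) * nrm w)^2 := by ring
      _ ≤ nrm (A.mulVec w)^2 := by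
          apply pow_le_pow_left₀ (mul_nonneg h1e hw) h1
  have hn2 := n2_nonneg w
  rw [abs_le]
  constructor
  · nlinarith
  · nlinarith

lemma n2_mulVec_le {A : Matrix (Fin d) (Fin D) ℂ} {ε : ℝ} (hε0 : 0 < ε) (hε1 : ε ≤ 1)
    {w : Fin D → ℂ} (h : JLprop A ε w) : n2 (A.mulVec w) ≤ 4 * n2 w := by
  have := jl_n2 hε0 hε1 h
  have := n2_nonneg w
  rw [abs_le] at *
  nlinarith

lemma core {A : Matrix (Fin d) (Fin D) ℂ} {ε : ℝ} (hε0 : 0 < ε) (hε1 : ε ≤ 1)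
    {u v : Fin D → ℂ} (hu : n2 u = 1) (hv : n2 v = 1)
    (hp : JLprop A ε (u + v)) (hm : JLprop A ε (u - v))
    (hpI : JLprop A ε (u + Complex.I • v)) (hmI : JLprop A ε (u - Complex.I • v)) :
    |Complex.normSq (ip (A.mulVec u) (A.mulVec v)) - Complex.normSq (ip u v)| ≤ 192 * ε := by
  set z := ip u v with hz
  set z' := ip (A.mulVec u) (A.mulVec v) with hz'
  have eP : n2 (u + v) = 2 + 2 * z.re := by rw [n2_add, hu, hv]; ring
  have eM : n2 (u - v) = 2 - 2 * z.re := by rw [n2_sub, hu, hv]; ring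
  have ePI : n2 (u + Complex.I • v) = 2 - 2 * z.im := by rw [n2_add_I, hu, hv]; ring
  have eMI : n2 (u - Complex.I • v) = 2 + 2 * z.im := by rw [n2_sub_I, hu, hv]; ring
  have fP : n2 (A.mulVec (u + v))
      = n2 (A.mulVec u) + n2 (A.mulVec v) + 2 * z'.re := by
    rw [Matrix.mulVec_add, n2_add]
  have fM : n2 (A.mulVec (u - v))
      = n2 (A.mulVec u) + n2 (A.mulVec v) - 2 * z'.re := by
    rw [Matrix.mulVec_sub, n2_sub]
  have fPI : n2 (A.mulVec (u + Complex.I • v))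
      = n2 (A.mulVec u) + n2 (A.mulVec v) - 2 * z'.im := by
    rw [Matrix.mulVec_add, Matrix.mulVec_smul, n2_add_I]
  have fMI : n2 (A.mulVec (u - Complex.I • v))
      = n2 (A.mulVec u) + n2 (A.mulVec v) + 2 * z'.im := by
    rw [Matrix.mulVec_sub, Matrix.mulVec_smul, n2_sub_I]
  have gP := jl_n2 hε0 hε1 hp
  have gM := jl_n2 hε0 hε1 hm
  have gPI := jl_n2 hε0 hε1 hpI
  have gMI := jl_n2 hε0 hε1 hmI
  rw [abs_le] at gP gM gPI gMI
  have nP := n2_nonneg (u + v)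
  have nM := n2_nonneg (u - v)
  have nPI := n2_nonneg (u + Complex.I • v)
  have nMI := n2_nonneg (u - Complex.I • v)
  have nAP := n2_nonneg (A.mulVec (u + v))
  have nAM := n2_nonneg (A.mulVec (u - v))
  have nAPI := n2_nonneg (A.mulVec (u + Complex.I • v))
  have nAMI := n2_nonneg (A.mulVec (u - Complex.I • v))
  have uP := n2_mulVec_le hε0 hε1 hp
  have uM := n2_mulVec_le hε0 hε1 hm
  have uPI := n2_mulVec_le hε0 hε1 hpI
  have uMI := n2_mulVec_le hε0 hε1 hmI
  have hre : |z.re| ≤ 1 := by rw [abs_le]; constructor <;> linarith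
  have him : |z.im| ≤ 1 := by rw [abs_le]; constructor <;> linarith
  have hre' : |z'.re| ≤ 4 := by rw [abs_le]; constructor <;> linarith
  have him' : |z'.im| ≤ 4 := by rw [abs_le]; constructor <;> linarith
  have sRe : 3*ε*n2 (u+v) + 3*ε*n2 (u-v) = 12*ε := by rw [eP, eM]; ring
  have sIm : 3*ε*n2 (u + Complex.I • v) + 3*ε*n2 (u - Complex.I • v) = 12*ε := by
    rw [ePI, eMI]; ring
  have hdre : |z'.re - z.re| ≤ 3 * ε := by rw [abs_le]; constructor <;> linarith
  have hdim : |z'.im - z.im| ≤ 3 * ε := by rw [abs_le]; constructor <;> linarith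
  have key1 : |z'.re^2 - z.re^2| ≤ 3*ε*5 := by
    have h1 : z'.re^2 - z.re^2 = (z'.re - z.re) * (z'.re + z.re) := by ring
    rw [h1, abs_mul]
    have : |z'.re + z.re| ≤ 5 := by
      calc |z'.re + z.re| ≤ |z'.re| + |z.re| := abs_add_le _ _
        _ ≤ 5 := by linarith
    exact mul_le_mul hdre this (abs_nonneg _) (by positivity)
  have key2 : |z'.im^2 - z.im^2| ≤ 3*ε*5 := by
    have h1 : z'.im^2 - z.im^2 = (z'.im - z.im) * (z'.im + z.im) := by ring
    rw [h1, abs_mul]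
    have : |z'.im + z.im| ≤ 5 := by
      calc |z'.im + z.im| ≤ |z'.im| + |z.im| := abs_add_le _ _
        _ ≤ 5 := by linarith
    exact mul_le_mul hdim this (abs_nonneg _) (by positivity)
  have hns : Complex.normSq z' - Complex.normSq z
      = (z'.re^2 - z.re^2) + (z'.im^2 - z.im^2) := by
    simp [Complex.normSq_apply]; ring
  calc |Complex.normSq z' - Complex.normSq z|
      ≤ |z'.re^2 - z.re^2| + |z'.im^2 - z.im^2| := by rw [hns]; exact abs_add_le _ _
    _ ≤ 192 * ε := by linarith

lemma trace_outer (u v w x : Fin D → ℂ) :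
    (vecMulVec u v * vecMulVec w x).trace = (v ⬝ᵥ w) * (x ⬝ᵥ u) := by
  simp only [Matrix.trace, Matrix.diag_apply, Matrix.mul_apply, vecMulVec_apply,
    dotProduct, Finset.sum_mul, Finset.mul_sum]
  exact Finset.sum_congr rfl fun j _ => Finset.sum_congr rfl fun i _ => by ring

lemma star_dot (u v : Fin D → ℂ) : star u ⬝ᵥ v = ip u v := by
  simp [dotProduct, ip]

lemma trace_outer_self (u w : Fin D → ℂ) :
    (vecMulVec u (star u) * vecMulVec w (star w)).trace
      = (Complex.normSq (ip u w) : ℂ) := by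
  rw [trace_outer, star_dot, star_dot, ip_conj u w, Complex.mul_conj]

lemma conj_outer (A : Matrix (Fin d) (Fin D) ℂ) (u : Fin D → ℂ) :
    A * vecMulVec u (star u) * Aᴴ = vecMulVec (A.mulVec u) (star (A.mulVec u)) := by
  ext i j
  simp only [Matrix.mul_apply, vecMulVec_apply, conjTranspose_apply, mulVec, dotProduct,
    Pi.star_apply, Finset.sum_mul, Finset.mul_sum, star_sum, star_mul', RCLike.star_def]
  exact Finset.sum_congr rfl fun l _ => Finset.sum_congr rfl fun k _ => by ring

lemma trace_re_sum {m : ℕ} (c e : Fin D → ℝ) (f g : Fin D → Fin m → ℂ) :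
    ((∑ a, (c a : ℂ) • vecMulVec (f a) (star (f a))) *
      (∑ b, (e b : ℂ) • vecMulVec (g b) (star (g b)))).trace.re
      = ∑ a, ∑ b, c a * e b * Complex.normSq (ip (f a) (g b)) := by
  rw [Matrix.sum_mul, Matrix.trace_sum, Complex.re_sum]
  refine Finset.sum_congr rfl fun a _ => ?_
  rw [Matrix.smul_mul, Matrix.mul_sum, Matrix.trace_smul]
  simp only [Matrix.mul_smul, Matrix.trace_sum, Matrix.trace_smul, trace_outer_self,
    smul_eq_mul, Finset.mul_sum]
  rw [Complex.re_sum]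
  refine Finset.sum_congr rfl fun b _ => ?_
  rw [← Complex.ofReal_mul, ← Complex.ofReal_mul, Complex.ofReal_re]
  ring

end JLAux

open JLAux

/-- If `A` is an ε-JL matrix for a common set of unit eigenvectors `ψ i a` of psd
matrices `M i = Σ_a λ i a |ψ i a⟩⟨ψ i a|` (including all sums/differences needed by the
polarization identity), then the compressions `M' i := A (M i) A†` satisfy
`|tr(M' i M' j) − tr(M i M j)| ≤ 192 ε ‖M i‖₁ ‖M j‖₁` where `‖M i‖₁ = Σ_a λ i a`. -/
theorem jl_compression_of_psd_matrices
    (J D d : ℕ) (A : Matrix (Fin d) (Fin D) ℂ)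
    (ε : ℝ) (hε0 : 0 < ε) (hε1 : ε ≤ 1)
    (lam : Fin J → Fin D → ℝ) (hlam : ∀ i a, 0 ≤ lam i a)
    (ψ : Fin J → Fin D → (Fin D → ℂ))
    (hunit : ∀ i a, nrm (ψ i a) = 1)
    (M : Fin J → Matrix (Fin D) (Fin D) ℂ)
    (hMdef : ∀ i, M i = ∑ a, (lam i a : ℂ) • Matrix.vecMulVec (ψ i a) (star (ψ i a)))
    (hJL : ∀ i a j b,
      JLprop A ε (ψ i a) ∧
      JLprop A ε (ψ i a + ψ j b) ∧ JLprop A ε (ψ i a - ψ j b) ∧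
      JLprop A ε (ψ i a + Complex.I • ψ j b) ∧ JLprop A ε (ψ i a - Complex.I • ψ j b)) :
    ∀ i j,
      |((A * M i * Aᴴ) * (A * M j * Aᴴ)).trace.re - (M i * M j).trace.re| ≤
        192 * ε * (∑ a, lam i a) * (∑ b, lam j b) := by
  intro i j
  have hn2 : ∀ k a, n2 (ψ k a) = 1 := by
    intro k a; rw [← nrm_sq, hunit]; norm_num
  have hM' : ∀ k, A * M k * Aᴴ
      = ∑ a, (lam k a : ℂ) • vecMulVec (A.mulVec (ψ k a)) (star (A.mulVec (ψ k a))) := by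
    intro k
    rw [hMdef k]
    simp only [Matrix.mul_sum, Matrix.sum_mul, Matrix.mul_smul, Matrix.smul_mul]
    exact Finset.sum_congr rfl fun a _ => by rw [conj_outer]
  have t1 : ((A * M i * Aᴴ) * (A * M j * Aᴴ)).trace.re
      = ∑ a, ∑ b, lam i a * lam j b
          * Complex.normSq (ip (A.mulVec (ψ i a)) (A.mulVec (ψ j b))) := by
    rw [hM' i, hM' j]
    exact trace_re_sum (lam i) (lam j) (fun a => A.mulVec (ψ i a)) (fun b => A.mulVec (ψ j b))
  have t2 : (M i * M j).trace.re
      = ∑ a, ∑ b, lam i a * lam j b * Complex.normSq (ip (ψ i a) (ψ j b)) := by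
    rw [hMdef i, hMdef j]
    exact trace_re_sum (lam i) (lam j) (ψ i) (ψ j)
  rw [t1, t2]
  have hsplit : (∑ a, ∑ b, lam i a * lam j b
          * Complex.normSq (ip (A.mulVec (ψ i a)) (A.mulVec (ψ j b))))
      - (∑ a, ∑ b, lam i a * lam j b * Complex.normSq (ip (ψ i a) (ψ j b)))
      = ∑ a, ∑ b, (lam i a * lam j b
          * Complex.normSq (ip (A.mulVec (ψ i a)) (A.mulVec (ψ j b)))
          - lam i a * lam j b * Complex.normSq (ip (ψ i a) (ψ j b))) := by
    rw [← Finset.sum_sub_distrib]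
    exact Finset.sum_congr rfl fun a _ => (Finset.sum_sub_distrib _ _).symm
  rw [hsplit]
  have hbd : ∀ a b, |lam i a * lam j b
          * Complex.normSq (ip (A.mulVec (ψ i a)) (A.mulVec (ψ j b)))
          - lam i a * lam j b * Complex.normSq (ip (ψ i a) (ψ j b))|
      ≤ lam i a * lam j b * (192 * ε) := by
    intro a b
    have hcd : 0 ≤ lam i a * lam j b := mul_nonneg (hlam i a) (hlam j b)
    obtain ⟨-, hp, hm, hpI, hmI⟩ := hJL i a j b
    have hc := core hε0 hε1 (hn2 i a) (hn2 j b) hp hm hpI hmI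
    rw [show lam i a * lam j b
          * Complex.normSq (ip (A.mulVec (ψ i a)) (A.mulVec (ψ j b)))
          - lam i a * lam j b * Complex.normSq (ip (ψ i a) (ψ j b))
        = (lam i a * lam j b)
          * (Complex.normSq (ip (A.mulVec (ψ i a)) (A.mulVec (ψ j b)))
            - Complex.normSq (ip (ψ i a) (ψ j b))) from by ring,
      abs_mul, abs_of_nonneg hcd]
    exact mul_le_mul_of_nonneg_left hc hcd
  calc |∑ a, ∑ b, (lam i a * lam j b
          * Complex.normSq (ip (A.mulVec (ψ i a)) (A.mulVec (ψ j b)))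
          - lam i a * lam j b * Complex.normSq (ip (ψ i a) (ψ j b)))|
      ≤ ∑ a, ∑ b, |lam i a * lam j b
          * Complex.normSq (ip (A.mulVec (ψ i a)) (A.mulVec (ψ j b)))
          - lam i a * lam j b * Complex.normSq (ip (ψ i a) (ψ j b))| := by
        refine (Finset.abs_sum_le_sum_abs _ _).trans ?_
        exact Finset.sum_le_sum fun a _ => Finset.abs_sum_le_sum_abs _ _
    _ ≤ ∑ a, ∑ b, lam i a * lam j b * (192 * ε) := by
        exact Finset.sum_le_sum fun a _ => Finset.sum_le_sum fun b _ => hbd a b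
    _ = 192 * ε * (∑ a, lam i a) * (∑ b, lam j b) := by
        calc ∑ a, ∑ b, lam i a * lam j b * (192 * ε)
            = ∑ a, lam i a * ((∑ b, lam j b) * (192 * ε)) :=
              Finset.sum_congr rfl fun a _ => by
                rw [← Finset.sum_mul, ← Finset.mul_sum, mul_assoc]
          _ = (∑ a, lam i a) * ((∑ b, lam j b) * (192 * ε)) := by rw [← Finset.sum_mul]
          _ = 192 * ε * (∑ a, lam i a) * (∑ b, lam j b) := by ring
end
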